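/- (One-step momentum error recursion, EMA estimator.) Let f : ℝ^{m×n} → ℝ be differentiable and L-smooth, and let G be a stochastic gradient oracle for f that is unbiased with variance bounded by σ². On a probability space, let X and M be random m×n matrices measurable with respect to a sub-σ-algebra 𝓕, with E‖M − ∇f(X)‖_F² < ∞; let O be an 𝓕-measurable random m×n matrix with ‖O‖_F² ≤ n almost surely, and set X' = X − η O for some η > 0. Let ξ be a Z-valued random variable with law μ, independent of 𝓕, and for β ∈ (0,1) set M' = β M + (1−β) G(X', ξ). Then E‖M' − ∇f(X')‖_F² ≤ β · E‖M − ∇f(X)‖_F² + (β²/(1−β)) L² η² n + (1−β)² σ². -/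

import Mathlib

set_option maxHeartbeats 1000000

open MeasureTheory ProbabilityTheory Real
open scoped RealInnerProductSpace

lemma key_sq_ineq {F : Type*} [NormedAddCommGroup F] [InnerProductSpace ℝ F]
    (β : ℝ) (hβ0 : 0 < β) (hβ1 : β < 1) (a b : F) :
    ‖β • (a + b)‖ ^ 2 ≤ β * ‖a‖ ^ 2 + (β ^ 2 / (1 - β)) * ‖b‖ ^ 2 := by
  have hb : (0:ℝ) < 1 - β := by linarith
  have h1 : ‖β • (a + b)‖ ^ 2 = β ^ 2 * ‖a + b‖ ^ 2 := by
    rw [norm_smul, Real.norm_eq_abs, abs_of_pos hβ0, mul_pow]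
  have h2 := norm_add_sq_real a b
  have h3 := real_inner_le_norm a b
  have hq : (β ^ 2 / (1 - β)) * (1 - β) = β ^ 2 := div_mul_cancel₀ _ hb.ne'
  rw [h1, h2]
  rw [← mul_le_mul_iff_of_pos_right hb]
  nlinarith [h3, sq_nonneg ((1 - β) * ‖a‖ - β * ‖b‖), mul_pos hβ0 hb,
    mul_pos (mul_pos hβ0 hβ0) hb, norm_nonneg a, norm_nonneg b]

theorem muon_momentum_error_recursion
    (m n : ℕ) (hmn : n ≤ m) (hn : 1 ≤ n)
    (f : EuclideanSpace ℝ (Fin m × Fin n) → ℝ)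
    (f' : EuclideanSpace ℝ (Fin m × Fin n) → EuclideanSpace ℝ (Fin m × Fin n))
    (L σ : ℝ) (hL : 0 < L) (hσ : 0 ≤ σ)
    (hgrad : ∀ Y, HasGradientAt f (f' Y) Y)
    (hsmooth : ∀ Y₁ Y₂, ‖f' Y₂ - f' Y₁‖ ≤ L * ‖Y₂ - Y₁‖)
    {Z : Type*} [MeasurableSpace Z] (μ : Measure Z) [IsProbabilityMeasure μ]
    (G : EuclideanSpace ℝ (Fin m × Fin n) → Z → EuclideanSpace ℝ (Fin m × Fin n))
    (hGmeas : Measurable (Function.uncurry G))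
    (hunbiased : ∀ Y, ∫ z, G Y z ∂μ = f' Y)
    (hvar : ∀ Y, ∫ z, ‖G Y z - f' Y‖ ^ 2 ∂μ ≤ σ ^ 2)
    {Ω : Type*} [mΩ : MeasurableSpace Ω] (P : Measure Ω) [IsProbabilityMeasure P]
    (ξ : Ω → Z) (hξmeas : Measurable ξ) (hlaw : P.map ξ = μ)
    (𝓕 : MeasurableSpace Ω) (h𝓕 : 𝓕 ≤ mΩ)
    (X M O : Ω → EuclideanSpace ℝ (Fin m × Fin n))
    (hXmeas : Measurable[𝓕] X) (hMmeas : Measurable[𝓕] M) (hOmeas : Measurable[𝓕] O)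
    (hint : Integrable (fun ω => ‖M ω - f' (X ω)‖ ^ 2) P)
    (hOn : ∀ᵐ ω ∂P, ‖O ω‖ ^ 2 ≤ (n : ℝ))
    (η : ℝ) (hη : 0 < η) (β : ℝ) (hβ0 : 0 < β) (hβ1 : β < 1)
    (hindep : Indep (MeasurableSpace.comap ξ inferInstance) 𝓕 P) :
    ∫ ω, ‖(β • M ω + (1 - β) • G (X ω - η • O ω) (ξ ω))
            - f' (X ω - η • O ω)‖ ^ 2 ∂P ≤
      β * ∫ ω, ‖M ω - f' (X ω)‖ ^ 2 ∂P
        + (β ^ 2 / (1 - β)) * L ^ 2 * η ^ 2 * n + (1 - β) ^ 2 * σ ^ 2 := by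
  classical
  have hc : (0:ℝ) < 1 - β := by linarith
  have hξmeas' : Measurable[mΩ] ξ := hξmeas
  -- f' is Lipschitz, hence measurable
  have hf'lip : LipschitzWith L.toNNReal f' := by
    apply LipschitzWith.of_dist_le_mul
    intro a b
    rw [dist_eq_norm, dist_eq_norm, Real.coe_toNNReal _ hL.le]
    exact hsmooth b a
  have hf'meas : Measurable f' := hf'lip.continuous.measurable
  -- the random variables
  set W : Ω → EuclideanSpace ℝ (Fin m × Fin n) := fun ω => X ω - η • O ω with hWdef
  have hWmeasF : Measurable[𝓕] W := by
    rw [hWdef]; exact hXmeas.sub (hOmeas.const_smul η)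
  have hWmeas : Measurable[mΩ] W := hWmeasF.mono h𝓕 le_rfl
  set S : Ω → EuclideanSpace ℝ (Fin m × Fin n) := fun ω => β • (M ω - f' (W ω))
    with hSdef
  have hSmeasF : Measurable[𝓕] S := by
    rw [hSdef]; exact (hMmeas.sub (hf'meas.comp hWmeasF)).const_smul β
  have hSmeas : Measurable[mΩ] S := hSmeasF.mono h𝓕 le_rfl
  set V : Ω → (EuclideanSpace ℝ (Fin m × Fin n)) × (EuclideanSpace ℝ (Fin m × Fin n)) :=
    fun ω => (S ω, W ω) with hVdef
  have hVmeasF : Measurable[𝓕] V := by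
    rw [hVdef]; exact hSmeasF.prodMk hWmeasF
  have hVmeas : Measurable[mΩ] V := hVmeasF.mono h𝓕 le_rfl
  have hindepVξ : IndepFun V ξ P := by
    rw [IndepFun_iff_Indep]
    exact indep_of_indep_of_le_left hindep.symm hVmeasF.comap_le
  clear hVmeasF hSmeasF hWmeasF hXmeas hMmeas hOmeas hindep h𝓕 𝓕
  set D : Ω → EuclideanSpace ℝ (Fin m × Fin n) := fun ω => G (W ω) (ξ ω) - f' (W ω)
    with hDdef
  have hDmeas : Measurable[mΩ] D := by
    rw [hDdef]
    exact (hGmeas.comp (hWmeas.prodMk hξmeas')).sub (hf'meas.comp hWmeas)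
  -- rewrite integrand
  have hrw : ∀ ω, ‖(β • M ω + (1 - β) • G (X ω - η • O ω) (ξ ω))
      - f' (X ω - η • O ω)‖ ^ 2 = ‖S ω + (1 - β) • D ω‖ ^ 2 := by
    intro ω
    have hXW : X ω - η • O ω = W ω := by rw [hWdef]
    have hvec : β • M ω + (1 - β) • G (W ω) (ξ ω) - f' (W ω)
        = S ω + (1 - β) • D ω := by
      simp only [hSdef, hDdef]
      module
    rw [hXW, hvec]
  rw [integral_congr_ae (Filter.Eventually.of_forall hrw)]
  have hint_nonneg : 0 ≤ ∫ ω, ‖M ω - f' (X ω)‖ ^ 2 ∂P :=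
    integral_nonneg fun ω => sq_nonneg _
  by_cases hg : Integrable (fun ω => ‖S ω + (1 - β) • D ω‖ ^ 2) P
  swap
  · rw [integral_undef hg]
    have h1 : 0 ≤ β * ∫ ω, ‖M ω - f' (X ω)‖ ^ 2 ∂P := mul_nonneg hβ0.le hint_nonneg
    have h2 : 0 ≤ (β ^ 2 / (1 - β)) * L ^ 2 * η ^ 2 * n := by positivity
    have h3 : 0 ≤ (1 - β) ^ 2 * σ ^ 2 := by positivity
    linarith
  -- pointwise bound for ‖S‖²
  set C : ℝ := (β ^ 2 / (1 - β)) * (L ^ 2 * η ^ 2 * n) with hCdef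
  have hSbound : ∀ᵐ ω ∂P, ‖S ω‖ ^ 2 ≤ β * ‖M ω - f' (X ω)‖ ^ 2 + C := by
    filter_upwards [hOn] with ω hO
    have hab : M ω - f' (W ω) = (M ω - f' (X ω)) + (f' (X ω) - f' (W ω)) := by abel
    have hS : S ω = β • ((M ω - f' (X ω)) + (f' (X ω) - f' (W ω))) := by
      simp only [hSdef]; rw [hab]
    have h1 : ‖S ω‖ ^ 2 ≤ β * ‖M ω - f' (X ω)‖ ^ 2
        + (β ^ 2 / (1 - β)) * ‖f' (X ω) - f' (W ω)‖ ^ 2 := by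
      rw [hS]; exact key_sq_ineq β hβ0 hβ1 _ _
    have h2 : ‖f' (X ω) - f' (W ω)‖ ^ 2 ≤ L ^ 2 * η ^ 2 * n := by
      have h3 : ‖f' (X ω) - f' (W ω)‖ ≤ L * (η * ‖O ω‖) := by
        have h5 := hsmooth (W ω) (X ω)
        have hXWO : X ω - W ω = η • O ω := by
          simp only [hWdef]; abel
        rw [hXWO, norm_smul, Real.norm_eq_abs, abs_of_pos hη] at h5
        exact h5
      have h4 : ‖f' (X ω) - f' (W ω)‖ ^ 2 ≤ (L * (η * ‖O ω‖)) ^ 2 :=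
        pow_le_pow_left₀ (norm_nonneg _) h3 2
      calc ‖f' (X ω) - f' (W ω)‖ ^ 2 ≤ (L * (η * ‖O ω‖)) ^ 2 := h4
        _ = L ^ 2 * η ^ 2 * ‖O ω‖ ^ 2 := by ring
        _ ≤ L ^ 2 * η ^ 2 * n := by
            apply mul_le_mul_of_nonneg_left hO (by positivity)
    have h5 : (β ^ 2 / (1 - β)) * ‖f' (X ω) - f' (W ω)‖ ^ 2 ≤ C := by
      rw [hCdef]
      exact mul_le_mul_of_nonneg_left h2 (by positivity)
    linarith
  -- integrability of ‖S‖²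
  have hRHSint : Integrable (fun ω => β * ‖M ω - f' (X ω)‖ ^ 2 + C) P :=
    (hint.const_mul β).add (integrable_const C)
  have hSsqmeas : Measurable[mΩ] fun ω => ‖S ω‖ ^ 2 := (hSmeas.norm).pow_const 2
  have hSsq_int : Integrable (fun ω => ‖S ω‖ ^ 2) P := by
    apply Integrable.mono' hRHSint hSsqmeas.aestronglyMeasurable
    filter_upwards [hSbound] with ω hω
    rw [Real.norm_eq_abs, abs_of_nonneg (sq_nonneg _)]
    exact hω
  -- integrability of ‖D‖²
  have hcDmeas : Measurable[mΩ] fun ω => ‖(1 - β) • D ω‖ ^ 2 :=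
    ((hDmeas.const_smul (1 - β)).norm).pow_const 2
  have hcDsq_int : Integrable (fun ω => ‖(1 - β) • D ω‖ ^ 2) P := by
    apply Integrable.mono' ((hg.add hSsq_int).const_mul 2) hcDmeas.aestronglyMeasurable
    apply Filter.Eventually.of_forall
    intro ω
    rw [Real.norm_eq_abs, abs_of_nonneg (sq_nonneg _)]
    have ht : ‖(1 - β) • D ω‖ ≤ ‖S ω + (1 - β) • D ω‖ + ‖S ω‖ := by
      have h6 := norm_sub_le (S ω + (1 - β) • D ω) (S ω)
      rwa [add_sub_cancel_left] at h6
    simp only [Pi.add_apply]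
    nlinarith [norm_nonneg ((1 - β) • D ω), norm_nonneg (S ω + (1 - β) • D ω),
      norm_nonneg (S ω), sq_nonneg (‖S ω + (1 - β) • D ω‖ - ‖S ω‖)]
  have hDsq_int : Integrable (fun ω => ‖D ω‖ ^ 2) P := by
    have heq : (fun ω => ‖D ω‖ ^ 2)
        = fun ω => (1 / (1 - β) ^ 2) * ‖(1 - β) • D ω‖ ^ 2 := by
      funext ω
      rw [norm_smul (1 - β) (D ω), Real.norm_eq_abs, abs_of_pos hc, mul_pow]
      field_simp
    rw [heq]
    exact hcDsq_int.const_mul _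
  -- integrability of the cross term
  have hSDmeas : Measurable[mΩ] fun ω => ⟪S ω, D ω⟫ := hSmeas.inner hDmeas
  have hcross_int : Integrable (fun ω => ⟪S ω, D ω⟫) P := by
    apply Integrable.mono' ((hSsq_int.add hDsq_int).const_mul (1/2 : ℝ))
      hSDmeas.aestronglyMeasurable
    apply Filter.Eventually.of_forall
    intro ω
    rw [Real.norm_eq_abs]
    have h1 := abs_real_inner_le_norm (S ω) (D ω)
    simp only [Pi.add_apply]
    refine h1.trans ?_
    nlinarith [sq_nonneg (‖S ω‖ - ‖D ω‖)]
  -- pointwise expansion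
  have hexp : ∀ ω, ‖S ω + (1 - β) • D ω‖ ^ 2
      = ‖S ω‖ ^ 2 + (2 * (1 - β)) * ⟪S ω, D ω⟫ + (1 - β) ^ 2 * ‖D ω‖ ^ 2 := by
    intro ω
    have h := norm_add_sq_real (S ω) ((1 - β) • D ω)
    rw [real_inner_smul_right, norm_smul (1 - β) (D ω), Real.norm_eq_abs,
      abs_of_pos hc, mul_pow] at h
    rw [h]; ring
  -- independence machinery
  have hPV : IsProbabilityMeasure (P.map V) := Measure.isProbabilityMeasure_map hVmeas.aemeasurable
  have hmap : P.map (fun ω => (V ω, ξ ω)) = (P.map V).prod μ := by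
    rw [← hlaw]
    exact (indepFun_iff_map_prod_eq_prod_map_map hVmeas.aemeasurable
      hξmeas'.aemeasurable).mp hindepVξ
  -- functions on the product space
  set q : ((EuclideanSpace ℝ (Fin m × Fin n)) × (EuclideanSpace ℝ (Fin m × Fin n))) × Z → ℝ :=
    fun p => ‖G p.1.2 p.2 - f' p.1.2‖ ^ 2 with hqdef
  set r : ((EuclideanSpace ℝ (Fin m × Fin n)) × (EuclideanSpace ℝ (Fin m × Fin n))) × Z → ℝ :=
    fun p => ⟪p.1.1, G p.1.2 p.2 - f' p.1.2⟫ with hrdef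
  have hGf : Measurable fun p :
      ((EuclideanSpace ℝ (Fin m × Fin n)) × (EuclideanSpace ℝ (Fin m × Fin n))) × Z =>
      G p.1.2 p.2 - f' p.1.2 := by
    have h7 : Measurable fun p :
        ((EuclideanSpace ℝ (Fin m × Fin n)) × (EuclideanSpace ℝ (Fin m × Fin n))) × Z =>
        G p.1.2 p.2 :=
      hGmeas.comp ((measurable_fst.snd).prodMk measurable_snd)
    exact h7.sub (hf'meas.comp measurable_fst.snd)
  have hqmeas : Measurable q := by rw [hqdef]; exact hGf.norm.pow_const 2
  have hrmeas : Measurable r := by rw [hrdef]; exact (measurable_fst.fst).inner hGf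
  have hpairmeas : Measurable[mΩ] fun ω => (V ω, ξ ω) := hVmeas.prodMk hξmeas'
  -- composition identities
  have hqcomp : (fun ω => q (V ω, ξ ω)) = fun ω => ‖D ω‖ ^ 2 := by
    funext ω; simp only [hqdef, hVdef, hDdef]
  have hrcomp : (fun ω => r (V ω, ξ ω)) = fun ω => ⟪S ω, D ω⟫ := by
    funext ω; simp only [hrdef, hVdef, hDdef]
  -- transfer integrability
  have hq_int : Integrable q ((P.map V).prod μ) := by
    rw [← hmap]
    rw [integrable_map_measure hqmeas.aestronglyMeasurable hpairmeas.aemeasurable]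
    show Integrable (fun ω => q (V ω, ξ ω)) P
    rw [hqcomp]; exact hDsq_int
  have hr_int : Integrable r ((P.map V).prod μ) := by
    rw [← hmap]
    rw [integrable_map_measure hrmeas.aestronglyMeasurable hpairmeas.aemeasurable]
    show Integrable (fun ω => r (V ω, ξ ω)) P
    rw [hrcomp]; exact hcross_int
  -- a.e. slice integrability
  have hae : ∀ᵐ v ∂(P.map V), Integrable (fun z => q (v, z)) μ := hq_int.prod_right_ae
  have hae2 : ∀ᵐ v ∂(P.map V), ∫ z, r (v, z) ∂μ = 0 := by
    filter_upwards [hae] with v hv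
    have hGvf : Integrable (fun z => G v.2 z - f' v.2) μ := by
      have hm : Measurable fun z => G v.2 z - f' v.2 :=
        (hGmeas.comp measurable_prodMk_left).sub measurable_const
      apply Integrable.mono' ((integrable_const (1:ℝ)).add hv) hm.aestronglyMeasurable
      apply Filter.Eventually.of_forall
      intro z
      simp only [Pi.add_apply, hqdef]
      nlinarith [norm_nonneg (G v.2 z - f' v.2), sq_nonneg (‖G v.2 z - f' v.2‖ - 1)]
    have h0 : ∫ z, (G v.2 z - f' v.2) ∂μ = 0 := by
      have hGvint : Integrable (fun z => G v.2 z) μ := by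
        have h8 : (fun z => G v.2 z) = fun z => (G v.2 z - f' v.2) + f' v.2 := by
          funext z; abel
        rw [h8]; exact hGvf.add (integrable_const _)
      rw [integral_sub hGvint (integrable_const _), hunbiased v.2, integral_const]
      simp
    have h9 : ∀ z, r (v, z) = ⟪v.1, G v.2 z - f' v.2⟫ := fun z => by
      simp only [hrdef]
    rw [integral_congr_ae (Filter.Eventually.of_forall h9)]
    rw [integral_inner hGvf, h0, inner_zero_right]
  -- cross term vanishes
  have hcross0 : ∫ ω, ⟪S ω, D ω⟫ ∂P = 0 := by
    rw [← hrcomp]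
    have h10 : ∫ ω, r (V ω, ξ ω) ∂P = ∫ p, r p ∂((P.map V).prod μ) := by
      rw [← hmap, integral_map hpairmeas.aemeasurable hrmeas.aestronglyMeasurable]
    rw [h10, integral_prod _ hr_int, integral_congr_ae hae2]
    simp
  -- variance bound
  have hvarP : ∫ ω, ‖D ω‖ ^ 2 ∂P ≤ σ ^ 2 := by
    rw [← hqcomp]
    have h11 : ∫ ω, q (V ω, ξ ω) ∂P = ∫ p, q p ∂((P.map V).prod μ) := by
      rw [← hmap, integral_map hpairmeas.aemeasurable hqmeas.aestronglyMeasurable]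
    rw [h11, integral_prod _ hq_int]
    calc ∫ v, ∫ z, q (v, z) ∂μ ∂(P.map V) ≤ ∫ _v, σ ^ 2 ∂(P.map V) := by
          apply integral_mono_ae hq_int.integral_prod_left (integrable_const _)
          apply Filter.Eventually.of_forall
          intro v
          simpa only [hqdef] using hvar v.2
      _ = σ ^ 2 := by simp
  -- first moment bound
  have hSint_le : ∫ ω, ‖S ω‖ ^ 2 ∂P ≤ β * (∫ ω, ‖M ω - f' (X ω)‖ ^ 2 ∂P) + C := by
    calc ∫ ω, ‖S ω‖ ^ 2 ∂P ≤ ∫ ω, (β * ‖M ω - f' (X ω)‖ ^ 2 + C) ∂P :=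
          integral_mono_ae hSsq_int hRHSint hSbound
      _ = β * (∫ ω, ‖M ω - f' (X ω)‖ ^ 2 ∂P) + C := by
          rw [integral_add (hint.const_mul β) (integrable_const C),
            integral_const_mul, integral_const]
          simp
  -- put it all together
  have hsplit : ∫ ω, ‖S ω + (1 - β) • D ω‖ ^ 2 ∂P
      = ∫ ω, ‖S ω‖ ^ 2 ∂P + (2 * (1 - β)) * ∫ ω, ⟪S ω, D ω⟫ ∂P
        + (1 - β) ^ 2 * ∫ ω, ‖D ω‖ ^ 2 ∂P := by
    have hI3 : Integrable (fun ω => 2 * (1 - β) * ⟪S ω, D ω⟫) P :=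
      hcross_int.const_mul _
    have hI2 : Integrable (fun ω => (1 - β) ^ 2 * ‖D ω‖ ^ 2) P :=
      hDsq_int.const_mul _
    have hI1 : Integrable (fun ω => ‖S ω‖ ^ 2 + 2 * (1 - β) * ⟪S ω, D ω⟫) P :=
      hSsq_int.add hI3
    rw [integral_congr_ae (Filter.Eventually.of_forall hexp)]
    rw [integral_add hI1 hI2, integral_add hSsq_int hI3, integral_const_mul,
      integral_const_mul]
  rw [hsplit, hcross0]
  have hfin : (1 - β) ^ 2 * ∫ ω, ‖D ω‖ ^ 2 ∂P ≤ (1 - β) ^ 2 * σ ^ 2 :=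
    mul_le_mul_of_nonneg_left hvarP (sq_nonneg _)
  rw [hCdef] at hSint_le
  have hfinal : (β ^ 2 / (1 - β)) * L ^ 2 * η ^ 2 * (n:ℝ)
      = (β ^ 2 / (1 - β)) * (L ^ 2 * η ^ 2 * n) := by ring
  rw [hfinal]
  linarith
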